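/- For z₀ on the unit circle and K a nonempty closed subset of the unit circle with dist(z₀, K) = d, the distance from z₀ to the convex hull of K is at least d²/2. -/
import Mathlib

open Metric

/-- For `z₀` on the unit circle and `K` a nonempty closed subset of the unit circle with
`dist(z₀, K) = d`, the distance from `z₀` to the closed convex hull of `K` is at least `d²/2`. -/
theorem stmt_9 (z₀ : ℂ) (hz₀ : ‖z₀‖ = 1) (K : Set ℂ)
    (hK : K ⊆ Metric.sphere (0 : ℂ) 1) (hKclosed : IsClosed K) (hKne : K.Nonempty) :
    Metric.infDist z₀ K ^ 2 / 2 ≤ Metric.infDist z₀ (closure (convexHull ℝ K)) := by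
  set d := Metric.infDist z₀ K with hd
  have hd0 : 0 ≤ d := Metric.infDist_nonneg
  set c : ℝ := 1 - d ^ 2 / 2 with hc
  set S : Set ℂ := {x | @inner ℝ ℂ _ z₀ x ≤ c} with hS
  have hKS : K ⊆ S := by
    intro w hw
    have hw1 : ‖w‖ = 1 := by simpa using hK hw
    have hdle : d ≤ dist z₀ w := Metric.infDist_le_dist_of_mem hw
    have hsq : dist z₀ w ^ 2 = 2 - 2 * @inner ℝ ℂ _ z₀ w := by
      rw [dist_eq_norm, @norm_sub_sq_real ℂ, hz₀, hw1]; ring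
    have h2 : d ^ 2 ≤ dist z₀ w ^ 2 := by
      apply pow_le_pow_left₀ hd0 hdle
    rw [hsq] at h2
    simp only [hS, Set.mem_setOf_eq, hc]
    linarith
  have hSconv : Convex ℝ S := convex_halfSpace_le
    ⟨fun x y => inner_add_right z₀ x y, fun r x => real_inner_smul_right z₀ x r⟩ c
  have hSclosed : IsClosed S := isClosed_le (continuous_const.inner continuous_id) continuous_const
  have hsub : closure (convexHull ℝ K) ⊆ S :=
    closure_minimal (convexHull_min hKS hSconv) hSclosed
  have hne : (closure (convexHull ℝ K)).Nonempty :=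
    (hKne.mono (subset_convexHull ℝ K)).mono subset_closure
  rw [hd, ← hd]
  by_contra hlt
  push_neg at hlt
  obtain ⟨x, hx, hxlt⟩ := (Metric.infDist_lt_iff hne).1 hlt
  have hxS : @inner ℝ ℂ _ z₀ x ≤ c := hsub hx
  have h1 : @inner ℝ ℂ _ z₀ (z₀ - x) ≤ ‖z₀‖ * ‖z₀ - x‖ := real_inner_le_norm _ _
  have h2 : @inner ℝ ℂ _ z₀ (z₀ - x) = @inner ℝ ℂ _ z₀ z₀ - @inner ℝ ℂ _ z₀ x :=
    inner_sub_right z₀ z₀ x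
  have h3 : @inner ℝ ℂ _ z₀ z₀ = 1 := by
    rw [real_inner_self_eq_norm_sq, hz₀]; norm_num
  rw [dist_eq_norm] at hxlt
  rw [hc] at hxS
  rw [hz₀, one_mul] at h1
  linarith
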